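/- Let h, b, L > 0 and H(t) = (t² + h²)^{-1/2}. Define F(t) = H(t) - H(t+b) - H(t+L) + H(t+b+L) for t > -b. Then for any ε ∈ (0,1]: if t + b + L < h/√(2+ε) (and 0 < b ≤ L), then F(t) < -(1/4) ε b L · H(t+b+L)³. -/

import Mathlib

open Real

private lemma aux_c2 (h w ε : ℝ) (hε : 0 < ε) (hε1 : ε ≤ 1)
    (hw2 : w ^ 2 * (2 + ε) < h ^ 2) :
    2 * w ^ 2 - h ^ 2 ≤ -((1/4) * ε) * (w ^ 2 + h ^ 2) := by
  nlinarith [mul_lt_mul_of_pos_left hw2 (show (0:ℝ) < 4 - ε by linarith),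
    mul_nonneg (mul_nonneg hε.le (show (0:ℝ) ≤ 1 - ε by linarith)) (sq_nonneg w)]

theorem stmt12 (h b L : ℝ) (hh : 0 < h) (hb : 0 < b) (hL : 0 < L) (hbL : b ≤ L)
    (H : ℝ → ℝ) (hH : ∀ t, H t = (t ^ 2 + h ^ 2) ^ (-(1/2) : ℝ))
    (ε : ℝ) (hε : 0 < ε) (hε1 : ε ≤ 1)
    (t : ℝ) (ht : -b < t) (ht' : t + b + L < h / Real.sqrt (2 + ε)) :
    H t - H (t + b) - H (t + L) + H (t + b + L) <
      -((1/4) * ε * b * L * (H (t + b + L)) ^ 3) := by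
  set s : ℝ → ℝ := fun x => Real.sqrt (x ^ 2 + h ^ 2) with hs_def
  have hpos : ∀ x : ℝ, 0 < x ^ 2 + h ^ 2 := fun x => by positivity
  have hspos : ∀ x : ℝ, 0 < s x := fun x => Real.sqrt_pos.mpr (hpos x)
  have hssq : ∀ x : ℝ, (s x) ^ 2 = x ^ 2 + h ^ 2 := fun x => Real.sq_sqrt (hpos x).le
  have hHs : ∀ x : ℝ, H x = (s x)⁻¹ := by
    intro x
    rw [hH x, Real.rpow_neg (hpos x).le, ← Real.sqrt_eq_rpow]
  set g : ℝ → ℝ := fun x => (s x)⁻¹ with hg_def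
  set g1 : ℝ → ℝ := fun x => -x / (s x) ^ 3 with hg1_def
  set g2 : ℝ → ℝ := fun x => (2 * x ^ 2 - h ^ 2) / (s x) ^ 5 with hg2_def
  have hds : ∀ x : ℝ, HasDerivAt s (x / s x) x := by
    intro x
    have h1 : HasDerivAt (fun u : ℝ => u ^ 2 + h ^ 2) (2 * x) x := by
      simpa using (hasDerivAt_pow 2 x).add_const (h ^ 2)
    have h2 := h1.sqrt (ne_of_gt (hpos x))
    convert h2 using 1
    have := hspos x
    rw [hs_def]
    field_simp
  have hdg : ∀ x : ℝ, HasDerivAt g (g1 x) x := by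
    intro x
    have h2 := (hds x).inv (ne_of_gt (hspos x))
    refine h2.congr_deriv ?_
    have hsx := (hspos x).ne'
    rw [hg1_def]
    field_simp
  have hdg1 : ∀ x : ℝ, HasDerivAt g1 (g2 x) x := by
    intro x
    have hnum : HasDerivAt (fun u : ℝ => -u) (-1 : ℝ) x := (hasDerivAt_id x).neg
    have hden : HasDerivAt (fun u : ℝ => (s u) ^ 3) (3 * (s x) ^ 2 * (x / s x)) x :=
      (hds x).pow 3
    have h2 := hnum.div hden (by have := hspos x; positivity)
    refine h2.congr_deriv ?_
    have hsx := hspos x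
    have hsq := hssq x
    rw [hg2_def]
    field_simp
    linear_combination (-1 : ℝ) * hsq
  set G : ℝ → ℝ := fun x => g x - g (x + L) with hG_def
  have hdG : ∀ x : ℝ, HasDerivAt G (g1 x - g1 (x + L)) x := by
    intro x
    exact (hdg x).sub ((hdg (x + L)).comp_add_const x L)
  have hcontG : ContinuousOn G (Set.Icc t (t + b)) :=
    (continuous_iff_continuousAt.mpr fun x => (hdG x).continuousAt).continuousOn
  obtain ⟨ξ, hξmem, hξ⟩ := exists_hasDerivAt_eq_slope G (fun x => g1 x - g1 (x + L))
    (by linarith) hcontG (fun x _ => hdG x)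
  have hcontg1 : ContinuousOn g1 (Set.Icc ξ (ξ + L)) :=
    (continuous_iff_continuousAt.mpr fun x => (hdg1 x).continuousAt).continuousOn
  obtain ⟨η, hηmem, hη⟩ := exists_hasDerivAt_eq_slope g1 g2
    (by linarith) hcontg1 (fun x _ => hdg1 x)
  obtain ⟨hξ1, hξ2⟩ := hξmem
  obtain ⟨hη1, hη2⟩ := hηmem
  -- F = b * L * g2 η
  have e1 : G (t + b) - G t = (g1 ξ - g1 (ξ + L)) * b := by
    rw [hξ, add_sub_cancel_left]; field_simp
  have e2 : g1 (ξ + L) - g1 ξ = g2 η * L := by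
    rw [hη, add_sub_cancel_left]; field_simp
  simp only [hG_def, hg_def] at e1
  have hF : H t - H (t + b) - H (t + L) + H (t + b + L) = b * L * g2 η := by
    rw [hHs t, hHs (t + b), hHs (t + L), hHs (t + b + L)]
    have hadd : t + b + L = (t + b) + L := by ring
    rw [hadd]
    linear_combination b * e2 - e1
  rw [hF, hHs]
  set w : ℝ := t + b + L with hw_def
  -- key bounds
  have hsq2 : (0:ℝ) < Real.sqrt (2 + ε) := Real.sqrt_pos.mpr (by linarith)
  have hwpos : 0 < w := by rw [hw_def]; linarith
  have hw2 : w ^ 2 * (2 + ε) < h ^ 2 := by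
    have h1 : w * Real.sqrt (2 + ε) < h := (lt_div_iff₀ hsq2).mp ht'
    have h2 : (Real.sqrt (2 + ε)) ^ 2 = 2 + ε := Real.sq_sqrt (by linarith)
    nlinarith [mul_pos hwpos hsq2]
  have hbw : b < w := by rw [hw_def]; linarith
  have hη_lt : η ^ 2 < w ^ 2 := by
    have h1 : η < w := by rw [hw_def]; linarith
    have h2 : -w < η := by linarith
    nlinarith
  have hsw := hspos w
  have hsη := hspos η
  have hsmon : s η < s w := by
    simp only [hs_def]
    exact Real.sqrt_lt_sqrt (by positivity) (by linarith)
  have hkey : g2 η < -((1/4) * ε * ((s w)⁻¹) ^ 3) := by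
    have hrw : -((1/4) * ε * ((s w)⁻¹) ^ 3) = (-((1/4) * ε)) / (s w) ^ 3 := by
      field_simp
    rw [hg2_def, hrw]
    simp only
    rw [div_lt_div_iff₀ (pow_pos hsη 5) (pow_pos hsw 3)]
    have c1 : (2 * η ^ 2 - h ^ 2) * (s w) ^ 3 < (2 * w ^ 2 - h ^ 2) * (s w) ^ 3 :=
      mul_lt_mul_of_pos_right (by linarith) (pow_pos hsw 3)
    have c2 : 2 * w ^ 2 - h ^ 2 ≤ -((1/4) * ε) * (w ^ 2 + h ^ 2) := aux_c2 h w ε hε hε1 hw2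
    have c3 : (2 * w ^ 2 - h ^ 2) * (s w) ^ 3 ≤ (-((1/4) * ε) * (w ^ 2 + h ^ 2)) * (s w) ^ 3 :=
      mul_le_mul_of_nonneg_right c2 (pow_pos hsw 3).le
    have c4 : (-((1/4) * ε) * (w ^ 2 + h ^ 2)) * (s w) ^ 3 = -((1/4) * ε) * (s w) ^ 5 := by
      have hb2 : w ^ 2 + h ^ 2 = (s w) ^ 2 := (hssq w).symm
      rw [hb2]; ring
    have c5 : -((1/4) * ε) * (s w) ^ 5 ≤ -((1/4) * ε) * (s η) ^ 5 := by
      have hpow : (s η) ^ 5 ≤ (s w) ^ 5 := pow_le_pow_left₀ hsη.le hsmon.le 5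
      exact mul_le_mul_of_nonpos_left hpow (by linarith)
    exact ((c1.trans_le c3).trans_eq c4).trans_le c5
  have hbL' : 0 < b * L := mul_pos hb hL
  calc b * L * g2 η < b * L * -((1/4) * ε * ((s w)⁻¹) ^ 3) :=
        mul_lt_mul_of_pos_left hkey hbL'
    _ = -((1/4) * ε * b * L * ((s w)⁻¹) ^ 3) := by ring
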